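/- There exists a constant c > 0 (depending only on α and H) such that for all reals 0 ≤ a ≤ s ≤ t, C_H · ∫_0^a ∫_ℝ ( exp(−(t−r)|ξ|^α) − exp(−(s−r)|ξ|^α) )^2 |ξ|^{1−2H} dξ dr ≤ c · (t−s)^{2θ}. (The left-hand side equals E[(Y_n(t,x) − Y_n(s,x))^2] with a = t_{n+1}, where Y_n = u − u_n is the approximation error; this is the canonical-metric increment bound for Y_n.) -/

import Mathlib

open MeasureTheory Real Set

open scoped ENNReal

lemma aux_int_le_toReal {X : Type*} [MeasurableSpace X] {μ : Measure X} {f : X → ℝ}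
    (hf : 0 ≤ᵐ[μ] f) : ∫ x, f x ∂μ ≤ (∫⁻ x, ENNReal.ofReal (f x) ∂μ).toReal := by
  by_cases hfi : Integrable f μ
  · rw [integral_eq_lintegral_of_nonneg_ae hf hfi.aestronglyMeasurable]
  · rw [integral_undef hfi]; exact ENNReal.toReal_nonneg

lemma aux_ofReal_int_le {X : Type*} [MeasurableSpace X] {μ : Measure X} {f : X → ℝ}
    (hf : 0 ≤ᵐ[μ] f) : ENNReal.ofReal (∫ x, f x ∂μ) ≤ ∫⁻ x, ENNReal.ofReal (f x) ∂μ := by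
  by_cases hfi : Integrable f μ
  · rw [ofReal_integral_eq_lintegral_ofReal hfi hf]
  · rw [integral_undef hfi]; simp

lemma lintegral_even_aux (g : ℝ → ℝ≥0∞) (hg : ∀ x, g (-x) = g x) :
    ∫⁻ x, g x = 2 * ∫⁻ x in Ioi (0:ℝ), g x := by
  have h1 : (∫⁻ x in Iic (0:ℝ), g x) + (∫⁻ x in Ioi (0:ℝ), g x) = ∫⁻ x, g x := by
    have := lintegral_add_compl (μ := (volume : Measure ℝ)) g (measurableSet_Iic (a := (0:ℝ)))
    simpa [compl_Iic] using this
  have h2 : ∫⁻ x in Iic (0:ℝ), g x = ∫⁻ x in Ici (0:ℝ), g x := by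
    have hemb : MeasurableEmbedding (fun x : ℝ => -x) := (Homeomorph.neg ℝ).measurableEmbedding
    calc ∫⁻ x in Iic (0:ℝ), g x
        = ∫⁻ x in Iic (0:ℝ), g x ∂(Measure.map Neg.neg (volume : Measure ℝ)) := by
          rw [Measure.map_neg_eq_self (volume : Measure ℝ)]
      _ = ∫⁻ x, g (-x) ∂((volume : Measure ℝ).restrict (Neg.neg ⁻¹' (Iic 0))) := by
          rw [Measure.restrict_map hemb.measurable measurableSet_Iic]
          exact hemb.lintegral_map g
      _ = ∫⁻ x in Ici (0:ℝ), g x := by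
          simp_rw [hg]
          congr 1
          simp [neg_preimage, neg_Iic]
  have h3 : ∫⁻ x in Ici (0:ℝ), g x = ∫⁻ x in Ioi (0:ℝ), g x := by
    refine setLIntegral_congr ?_
    exact (Ioi_ae_eq_Ici (a := (0:ℝ))).symm
  rw [← h1, h2, h3, two_mul]

lemma piece_Ioc {c m R : ℝ} (hc : 0 ≤ c) (hm : -1 < m) (hR : 0 < R) :
    ∫⁻ ξ in Ioc (0:ℝ) R, ENNReal.ofReal (c * ξ ^ m) = ENNReal.ofReal (c * (R ^ (m+1) / (m+1))) := by
  have hint : IntegrableOn (fun ξ : ℝ => c * ξ ^ m) (Ioc 0 R) := by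
    refine Integrable.const_mul ?_ c
    exact (intervalIntegrable_iff_integrableOn_Ioc_of_le hR.le).mp
      (intervalIntegral.intervalIntegrable_rpow' hm)
  have hnn : 0 ≤ᵐ[volume.restrict (Ioc (0:ℝ) R)] fun ξ : ℝ => c * ξ ^ m := by
    filter_upwards [ae_restrict_mem measurableSet_Ioc] with ξ hξ
    exact mul_nonneg hc (rpow_nonneg hξ.1.le m)
  rw [← ofReal_integral_eq_lintegral_ofReal hint hnn]
  congr 1
  rw [← intervalIntegral.integral_of_le hR.le, intervalIntegral.integral_const_mul,
    integral_rpow (Or.inl hm)]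
  rw [zero_rpow (by linarith : m + 1 ≠ 0)]
  ring

lemma piece_Ioi {c q R : ℝ} (hc : 0 ≤ c) (hq : q < -1) (hR : 0 < R) :
    ∫⁻ ξ in Ioi R, ENNReal.ofReal (c * ξ ^ q) = ENNReal.ofReal (c * (-R ^ (q+1) / (q+1))) := by
  have hint : IntegrableOn (fun ξ : ℝ => c * ξ ^ q) (Ioi R) :=
    (integrableOn_Ioi_rpow_of_lt hq hR).const_mul c
  have hnn : 0 ≤ᵐ[volume.restrict (Ioi R)] fun ξ : ℝ => c * ξ ^ q := by
    filter_upwards [ae_restrict_mem measurableSet_Ioi] with ξ hξ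
    exact mul_nonneg hc (rpow_nonneg (hR.trans hξ).le q)
  rw [← ofReal_integral_eq_lintegral_ofReal hint hnn]
  congr 1
  rw [MeasureTheory.integral_const_mul, integral_Ioi_rpow_of_lt hq hR]

lemma step_r {x a s : ℝ} (hx : 0 < x) (ha : 0 ≤ a) (has : a ≤ s) :
    ∫⁻ r in Ioc (0:ℝ) a, ENNReal.ofReal (exp (-(2 * (s - r) * x))) ≤ ENNReal.ofReal ((2*x)⁻¹) := by
  have hcont : Continuous fun r : ℝ => exp (-(2 * (s - r) * x)) := by fun_prop
  have hint : IntegrableOn (fun r : ℝ => exp (-(2 * (s - r) * x))) (Ioc 0 a) :=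
    hcont.integrableOn_Ioc
  rw [← ofReal_integral_eq_lintegral_ofReal hint (ae_of_all _ fun r => (exp_pos _).le)]
  apply ENNReal.ofReal_le_ofReal
  have h1 : ∫ r in Ioc (0:ℝ) a, exp (-(2 * (s - r) * x))
      = ∫ r in (0:ℝ)..a, exp (-(2 * (s - r) * x)) :=
    (intervalIntegral.integral_of_le ha).symm
  have h2 : ∀ r : ℝ, exp (-(2 * (s - r) * x)) = exp (-(2*s*x)) * exp ((2*x) * r) := by
    intro r; rw [← exp_add]; ring_nf
  have h3 : ∫ r in (0:ℝ)..a, exp ((2*x) * r) = (2*x)⁻¹ • ∫ u in ((2*x)*0)..((2*x)*a), exp u :=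
    intervalIntegral.integral_comp_mul_left exp (by positivity : (2*x) ≠ 0)
  rw [h1]
  simp_rw [h2]
  rw [intervalIntegral.integral_const_mul, h3, integral_exp, mul_zero, exp_zero, smul_eq_mul]
  have e1 : exp (-(2*s*x)) * exp (2*x*a) ≤ 1 := by
    rw [← exp_add]
    exact exp_le_one_iff.mpr (by nlinarith)
  have e2 : (0:ℝ) < exp (-(2*s*x)) := exp_pos _
  have e3 : (0:ℝ) < (2*x)⁻¹ := by positivity
  calc exp (-(2*s*x)) * ((2*x)⁻¹ * (exp (2*x*a) - 1))
      = (2*x)⁻¹ * (exp (-(2*s*x)) * exp (2*x*a) - exp (-(2*s*x))) := by ring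
    _ ≤ (2*x)⁻¹ * 1 := by nlinarith
    _ = (2*x)⁻¹ := mul_one _

lemma rb1 {δ x q α : ℝ} (hδ : 0 ≤ δ) (hx : 0 < x) :
    (1 - exp (-(δ * x ^ α)))^2 * x ^ q * 2⁻¹ ≤ (δ^2/2) * x ^ (q + 2*α) := by
  have hxa : (0:ℝ) ≤ x ^ α := (rpow_pos_of_pos hx α).le
  have hy0 : 0 ≤ δ * x ^ α := mul_nonneg hδ hxa
  have h1 : 1 - exp (-(δ * x ^ α)) ≤ δ * x ^ α := by nlinarith [add_one_le_exp (-(δ * x ^ α))]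
  have h2 : 0 ≤ 1 - exp (-(δ * x ^ α)) := by
    nlinarith [exp_le_one_iff.mpr (neg_nonpos.mpr hy0)]
  have hsq : (1 - exp (-(δ * x ^ α)))^2 ≤ (δ * x ^ α)^2 := by nlinarith
  have hmul : (x^α) * (x^α) * (x^q) = x ^ (q + 2*α) := by
    rw [← Real.rpow_add hx, ← Real.rpow_add hx]; congr 1; ring
  have hxq : (0:ℝ) ≤ x ^ q := rpow_nonneg hx.le q
  calc (1 - exp (-(δ * x ^ α)))^2 * x ^ q * 2⁻¹
      ≤ (δ * x ^ α)^2 * x ^ q * 2⁻¹ := by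
        apply mul_le_mul_of_nonneg_right ?_ (by norm_num)
        exact mul_le_mul_of_nonneg_right hsq hxq
    _ = (δ^2/2) * ((x^α) * (x^α) * (x^q)) := by ring
    _ = (δ^2/2) * x ^ (q + 2*α) := by rw [hmul]

lemma rb2 {δ x q α : ℝ} (hδ : 0 ≤ δ) (hx : 0 < x) :
    (1 - exp (-(δ * x ^ α)))^2 * x ^ q * 2⁻¹ ≤ 2⁻¹ * x ^ q := by
  have hxa : (0:ℝ) ≤ x ^ α := (rpow_pos_of_pos hx α).le
  have hy0 : 0 ≤ δ * x ^ α := mul_nonneg hδ hxa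
  have h2 : 0 ≤ 1 - exp (-(δ * x ^ α)) := by
    nlinarith [exp_le_one_iff.mpr (neg_nonpos.mpr hy0)]
  have h3 : (1 - exp (-(δ * x ^ α)))^2 ≤ 1 := by
    nlinarith [exp_pos (-(δ * x ^ α))]
  have hxq : (0:ℝ) ≤ x ^ q := rpow_nonneg hx.le q
  calc (1 - exp (-(δ * x ^ α)))^2 * x ^ q * 2⁻¹
      ≤ 1 * x ^ q * 2⁻¹ := by
        apply mul_le_mul_of_nonneg_right ?_ (by norm_num)
        exact mul_le_mul_of_nonneg_right h3 hxq
    _ = 2⁻¹ * x ^ q := by ring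

lemma rb3 {x α : ℝ} (hx : 0 < x) (c e : ℝ) :
    (2 * (x ^ α))⁻¹ * (c * x ^ e) = c * x ^ (e - α) * 2⁻¹ := by
  have hxa : (0:ℝ) < x ^ α := rpow_pos_of_pos hx α
  rw [Real.rpow_sub hx, mul_inv, div_eq_mul_inv]
  ring

lemma core_bound {α H a s t : ℝ} (hα₁ : 1 < α) (hα₂ : α ≤ 2)
    (hH₁ : (2 - α) / 2 < H) (hH₂ : H < 1)
    (ha : 0 ≤ a) (has : a ≤ s) (hlt : s < t) :
    (∫ r in Ioc (0:ℝ) a, ∫ ξ : ℝ,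
        (exp (-(t - r) * |ξ| ^ α) - exp (-(s - r) * |ξ| ^ α)) ^ 2 * |ξ| ^ (1 - 2 * H))
    ≤ (1/((1 - 2*H + α) + 1) + 1/(-((1 - 2*H - α) + 1))) * (t - s) ^ ((α - 2 + 2*H)/α) := by
  have hα0 : 0 < α := by linarith
  have hq : (1 - 2*H - α) < -1 := by nlinarith
  have hm : -1 < 1 - 2*H + α := by nlinarith
  set q : ℝ := 1 - 2*H - α with hqdef
  set m : ℝ := 1 - 2*H + α with hmdef
  set E : ℝ := (α - 2 + 2*H)/α with hEdef
  set δ : ℝ := t - s with hδdef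
  have hδ : 0 < δ := sub_pos.mpr hlt
  set R : ℝ := δ ^ (-α⁻¹) with hRdef
  have hR : 0 < R := rpow_pos_of_pos hδ _
  have hq1 : 0 < -(q+1) := by rw [hqdef]; linarith
  have hm1 : 0 < m+1 := by rw [hmdef]; linarith
  have hqm : q + 2*α = m := by rw [hqdef, hmdef]; ring
  have hRm : R ^ (m+1) = δ ^ ((-α⁻¹) * (m+1)) := by
    rw [hRdef, ← Real.rpow_mul hδ.le]
  have hRq : R ^ (q+1) = δ ^ ((-α⁻¹) * (q+1)) := by
    rw [hRdef, ← Real.rpow_mul hδ.le]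
  have hpm : δ^2 * δ ^ ((-α⁻¹) * (m+1)) = δ ^ E := by
    rw [← Real.rpow_natCast δ 2, ← Real.rpow_add hδ]
    congr 1
    rw [hmdef, hEdef]
    field_simp
    ring
  have hpq : δ ^ ((-α⁻¹) * (q+1)) = δ ^ E := by
    congr 1
    rw [hqdef, hEdef]
    field_simp
    ring
  clear_value q m E δ R
  set G : ℝ → ℝ≥0∞ := fun ξ =>
    ENNReal.ofReal ((1 - exp (-(δ * |ξ| ^ α)))^2 * |ξ| ^ q * 2⁻¹) with hGdef
  clear_value G
  have hmeas : AEMeasurable (fun p : ℝ × ℝ =>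
      ENNReal.ofReal ((exp (-(t - p.1) * |p.2| ^ α) - exp (-(s - p.1) * |p.2| ^ α)) ^ 2
        * |p.2| ^ (1 - 2 * H)))
      ((volume.restrict (Ioc (0:ℝ) a)).prod volume) := by
    apply Measurable.aemeasurable
    apply Measurable.ennreal_ofReal
    fun_prop
  have key : ∀ ξ : ℝ, (∫⁻ r in Ioc (0:ℝ) a, ENNReal.ofReal
      ((exp (-(t - r) * |ξ| ^ α) - exp (-(s - r) * |ξ| ^ α)) ^ 2 * |ξ| ^ (1 - 2 * H)))
      ≤ G ξ := by
    intro ξ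
    rcases eq_or_ne ξ 0 with h0 | h0
    · subst h0
      have hz : ∀ r : ℝ, (exp (-(t - r) * |(0:ℝ)| ^ α) - exp (-(s - r) * |(0:ℝ)| ^ α)) ^ 2
          * |(0:ℝ)| ^ (1 - 2 * H) = 0 := by
        intro r
        simp [Real.zero_rpow hα0.ne']
      simp only [hz, ENNReal.ofReal_zero, lintegral_zero]
      exact zero_le
    · have habs : 0 < |ξ| := abs_pos.mpr h0
      have hx : 0 < |ξ| ^ α := rpow_pos_of_pos habs α
      have hfr : ∀ r : ℝ,
          (exp (-(t - r) * |ξ| ^ α) - exp (-(s - r) * |ξ| ^ α)) ^ 2 * |ξ| ^ (1 - 2 * H) =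
          exp (-(2 * (s - r) * (|ξ| ^ α)))
            * ((1 - exp (-(δ * |ξ| ^ α)))^2 * |ξ| ^ (1 - 2*H)) := by
        intro r
        have ht' : exp (-(t - r) * |ξ| ^ α)
            = exp (-(s - r) * |ξ| ^ α) * exp (-(δ * |ξ| ^ α)) := by
          rw [← exp_add]; congr 1; rw [hδdef]; ring
        have hsq : exp (-(s - r) * |ξ| ^ α) * exp (-(s - r) * |ξ| ^ α)
            = exp (-(2 * (s - r) * (|ξ| ^ α))) := by
          rw [← exp_add]; congr 1; ring
        rw [ht', ← hsq]
        ring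
      simp only [hfr]
      calc ∫⁻ r in Ioc (0:ℝ) a, ENNReal.ofReal (exp (-(2 * (s - r) * (|ξ| ^ α)))
            * ((1 - exp (-(δ * |ξ| ^ α)))^2 * |ξ| ^ (1 - 2*H)))
          = ∫⁻ r in Ioc (0:ℝ) a, ENNReal.ofReal (exp (-(2 * (s - r) * (|ξ| ^ α))))
              * ENNReal.ofReal ((1 - exp (-(δ * |ξ| ^ α)))^2 * |ξ| ^ (1 - 2*H)) := by
            simp_rw [ENNReal.ofReal_mul (exp_pos _).le]
        _ = (∫⁻ r in Ioc (0:ℝ) a, ENNReal.ofReal (exp (-(2 * (s - r) * (|ξ| ^ α)))))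
              * ENNReal.ofReal ((1 - exp (-(δ * |ξ| ^ α)))^2 * |ξ| ^ (1 - 2*H)) :=
            lintegral_mul_const' _ _ ENNReal.ofReal_ne_top
        _ ≤ ENNReal.ofReal ((2 * (|ξ| ^ α))⁻¹)
              * ENNReal.ofReal ((1 - exp (-(δ * |ξ| ^ α)))^2 * |ξ| ^ (1 - 2*H)) :=
            mul_le_mul_left (step_r hx ha has) _
        _ = ENNReal.ofReal ((2 * (|ξ| ^ α))⁻¹
              * ((1 - exp (-(δ * |ξ| ^ α)))^2 * |ξ| ^ (1 - 2*H))) :=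
            (ENNReal.ofReal_mul (by positivity)).symm
        _ = G ξ := by
            rw [hGdef]
            congr 1
            rw [rb3 habs _ _, hqdef]
  have hIoc : (∫⁻ ξ in Ioc (0:ℝ) R, G ξ)
      ≤ ENNReal.ofReal ((δ^2/2) * (R ^ (m+1) / (m+1))) := by
    have hmono : ∀ ξ ∈ Ioc (0:ℝ) R, G ξ ≤ ENNReal.ofReal ((δ^2/2) * ξ ^ m) := by
      intro ξ hξ
      have hξ0 : 0 < ξ := hξ.1
      rw [hGdef]
      simp only [abs_of_pos hξ0]
      apply ENNReal.ofReal_le_ofReal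
      rw [← hqm]
      exact rb1 hδ.le hξ0
    calc (∫⁻ ξ in Ioc (0:ℝ) R, G ξ)
        ≤ ∫⁻ ξ in Ioc (0:ℝ) R, ENNReal.ofReal ((δ^2/2) * ξ ^ m) :=
          setLIntegral_mono' measurableSet_Ioc hmono
      _ = ENNReal.ofReal ((δ^2/2) * (R ^ (m+1) / (m+1))) :=
          piece_Ioc (by positivity) (by linarith) hR
  have hIoi : (∫⁻ ξ in Ioi R, G ξ)
      ≤ ENNReal.ofReal (2⁻¹ * (-R ^ (q+1) / (q+1))) := by
    have hmono : ∀ ξ ∈ Ioi R, G ξ ≤ ENNReal.ofReal (2⁻¹ * ξ ^ q) := by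
      intro ξ hξ
      have hξ0 : 0 < ξ := hR.trans hξ
      rw [hGdef]
      simp only [abs_of_pos hξ0]
      apply ENNReal.ofReal_le_ofReal
      exact rb2 hδ.le hξ0
    calc (∫⁻ ξ in Ioi R, G ξ)
        ≤ ∫⁻ ξ in Ioi R, ENNReal.ofReal (2⁻¹ * ξ ^ q) :=
          setLIntegral_mono' measurableSet_Ioi hmono
      _ = ENNReal.ofReal (2⁻¹ * (-R ^ (q+1) / (q+1))) :=
          piece_Ioi (by norm_num) (by linarith) hR
  have hA2nn : (0:ℝ) ≤ 2⁻¹ * (-R ^ (q+1) / (q+1)) := by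
    have hx : (0:ℝ) < R ^ (q+1) := rpow_pos_of_pos hR _
    have : (0:ℝ) < -R ^ (q+1) / (q+1) := div_pos_of_neg_of_neg (by linarith) (by linarith)
    linarith
  have halg : 2 * ((δ^2/2) * (R ^ (m+1) / (m+1)) + 2⁻¹ * (-R ^ (q+1) / (q+1)))
      = (1/(m+1) + 1/(-(q+1))) * δ ^ E := by
    have e1 : 2 * ((δ^2/2) * (R ^ (m+1) / (m+1)) + 2⁻¹ * (-R ^ (q+1) / (q+1)))
        = (δ^2 * R ^ (m+1)) * (m+1)⁻¹ + R ^ (q+1) * (-(q+1))⁻¹ := by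
      rw [inv_neg]
      ring
    rw [e1, hRm, hRq, hpm, hpq]
    ring
  have hM : (∫⁻ r in Ioc (0:ℝ) a, ∫⁻ ξ : ℝ, ENNReal.ofReal
      ((exp (-(t - r) * |ξ| ^ α) - exp (-(s - r) * |ξ| ^ α)) ^ 2 * |ξ| ^ (1 - 2 * H)))
      ≤ ENNReal.ofReal ((1/(m+1) + 1/(-(q+1))) * δ ^ E) := by
    rw [lintegral_lintegral_swap hmeas]
    calc ∫⁻ ξ : ℝ, ∫⁻ r in Ioc (0:ℝ) a, ENNReal.ofReal
          ((exp (-(t - r) * |ξ| ^ α) - exp (-(s - r) * |ξ| ^ α)) ^ 2 * |ξ| ^ (1 - 2 * H))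
        ≤ ∫⁻ ξ : ℝ, G ξ := lintegral_mono key
      _ = 2 * ∫⁻ ξ in Ioi (0:ℝ), G ξ := by
          apply lintegral_even_aux
          intro x
          rw [hGdef]
          simp
      _ = 2 * ((∫⁻ ξ in Ioc (0:ℝ) R, G ξ) + ∫⁻ ξ in Ioi R, G ξ) := by
          rw [← lintegral_union measurableSet_Ioi (Ioc_disjoint_Ioi le_rfl),
            Ioc_union_Ioi_eq_Ioi hR.le]
      _ ≤ 2 * (ENNReal.ofReal ((δ^2/2) * (R ^ (m+1) / (m+1)))
            + ENNReal.ofReal (2⁻¹ * (-R ^ (q+1) / (q+1)))) := by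
          gcongr
      _ = ENNReal.ofReal (2 * ((δ^2/2) * (R ^ (m+1) / (m+1))
            + 2⁻¹ * (-R ^ (q+1) / (q+1)))) := by
          rw [← ENNReal.ofReal_add (by positivity) hA2nn,
            ENNReal.ofReal_mul (by norm_num : (0:ℝ) ≤ 2), ENNReal.ofReal_ofNat]
      _ = ENNReal.ofReal ((1/(m+1) + 1/(-(q+1))) * δ ^ E) := by rw [halg]
  have hnn : ∀ r ξ : ℝ,
      0 ≤ (exp (-(t - r) * |ξ| ^ α) - exp (-(s - r) * |ξ| ^ α)) ^ 2 * |ξ| ^ (1 - 2 * H) :=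
    fun r ξ => mul_nonneg (sq_nonneg _) (rpow_nonneg (abs_nonneg _) _)
  have hc0 : 0 ≤ (1/(m+1) + 1/(-(q+1))) * δ ^ E := by
    have h1 : (0:ℝ) ≤ 1/(m+1) := (div_pos one_pos hm1).le
    have h2 : (0:ℝ) ≤ 1/(-(q+1)) := (div_pos one_pos hq1).le
    exact mul_nonneg (add_nonneg h1 h2) (rpow_nonneg hδ.le E)
  calc (∫ r in Ioc (0:ℝ) a, ∫ ξ : ℝ,
        (exp (-(t - r) * |ξ| ^ α) - exp (-(s - r) * |ξ| ^ α)) ^ 2 * |ξ| ^ (1 - 2 * H))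
      ≤ (∫⁻ r in Ioc (0:ℝ) a, ENNReal.ofReal (∫ ξ : ℝ,
          (exp (-(t - r) * |ξ| ^ α) - exp (-(s - r) * |ξ| ^ α)) ^ 2
            * |ξ| ^ (1 - 2 * H))).toReal :=
        aux_int_le_toReal (ae_of_all _ fun r => integral_nonneg (hnn r))
    _ ≤ (ENNReal.ofReal ((1/(m+1) + 1/(-(q+1))) * δ ^ E)).toReal := by
        apply ENNReal.toReal_mono ENNReal.ofReal_ne_top
        exact le_trans
          (lintegral_mono fun r => aux_ofReal_int_le (ae_of_all _ (hnn r))) hM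
    _ = (1/(m+1) + 1/(-(q+1))) * δ ^ E := ENNReal.toReal_ofReal hc0

/-- Canonical-metric increment bound for the approximation error `Y_n = u - u_n`:
for `α ∈ (1,2]`, `H ∈ ((2-α)/2, 1)`, `θ = 1/2 - (1-H)/α` and
`C_H = Γ(2H+1)·sin(πH)/(2π)`, there is a constant `c > 0` such that for all
`0 ≤ a ≤ s ≤ t`,
`C_H · ∫₀ᵃ ∫_ℝ (e^{-(t-r)|ξ|^α} - e^{-(s-r)|ξ|^α})² |ξ|^{1-2H} dξ dr ≤ c·(t-s)^{2θ}`. -/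
theorem stmt_5 (α H θ C_H : ℝ) (hα₁ : 1 < α) (hα₂ : α ≤ 2)
    (hH₁ : (2 - α) / 2 < H) (hH₂ : H < 1)
    (hθ : θ = 1 / 2 - (1 - H) / α)
    (hC : C_H = Real.Gamma (2 * H + 1) * Real.sin (Real.pi * H) / (2 * Real.pi)) :
    ∃ c > (0 : ℝ), ∀ a s t : ℝ, 0 ≤ a → a ≤ s → s ≤ t →
      C_H * (∫ r in Set.Ioc 0 a, ∫ ξ : ℝ,
          (Real.exp (-(t - r) * |ξ| ^ α) - Real.exp (-(s - r) * |ξ| ^ α)) ^ 2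
            * |ξ| ^ (1 - 2 * H))
      ≤ c * (t - s) ^ (2 * θ) := by
  have hα0 : 0 < α := by linarith
  have hH0 : 0 < H := by nlinarith
  have hq1 : 0 < -((1 - 2*H - α) + 1) := by nlinarith
  have hm1 : 0 < (1 - 2*H + α) + 1 := by nlinarith
  have hE : 2*θ = (α - 2 + 2*H)/α := by rw [hθ]; field_simp; ring
  have hEpos : 0 < (α - 2 + 2*H)/α := by
    apply div_pos ?_ hα0; nlinarith
  have hCH : 0 ≤ C_H := by
    rw [hC]
    apply div_nonneg ?_ (by positivity)
    apply mul_nonneg (Real.Gamma_pos_of_pos (by linarith)).le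
    apply Real.sin_nonneg_of_nonneg_of_le_pi (by positivity)
    nlinarith [Real.pi_pos]
  have hc0 : 0 < 1/((1 - 2*H + α) + 1) + 1/(-((1 - 2*H - α) + 1)) := by positivity
  refine ⟨C_H * (1/((1 - 2*H + α) + 1) + 1/(-((1 - 2*H - α) + 1))) + 1, by positivity, ?_⟩
  intro a s t ha has hst
  rw [hE]
  rcases eq_or_lt_of_le hst with heq | hlt
  · subst heq
    have hz : ∀ r : ℝ, (∫ ξ : ℝ,
        (Real.exp (-(s - r) * |ξ| ^ α) - Real.exp (-(s - r) * |ξ| ^ α)) ^ 2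
          * |ξ| ^ (1 - 2 * H)) = 0 := by
      intro r; simp
    rw [MeasureTheory.setIntegral_congr_fun measurableSet_Ioc (fun r _ => hz r)]
    simp only [integral_zero, mul_zero, sub_self]
    rw [Real.zero_rpow hEpos.ne']
    simp
  · have hB := core_bound hα₁ hα₂ hH₁ hH₂ ha has hlt
    have hrp : (0:ℝ) ≤ (t - s) ^ ((α - 2 + 2*H)/α) :=
      Real.rpow_nonneg (by linarith) _
    calc C_H * (∫ r in Set.Ioc 0 a, ∫ ξ : ℝ,
          (Real.exp (-(t - r) * |ξ| ^ α) - Real.exp (-(s - r) * |ξ| ^ α)) ^ 2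
            * |ξ| ^ (1 - 2 * H))
        ≤ C_H * ((1/((1 - 2*H + α) + 1) + 1/(-((1 - 2*H - α) + 1)))
            * (t - s) ^ ((α - 2 + 2*H)/α)) := mul_le_mul_of_nonneg_left hB hCH
      _ ≤ (C_H * (1/((1 - 2*H + α) + 1) + 1/(-((1 - 2*H - α) + 1))) + 1)
            * (t - s) ^ ((α - 2 + 2*H)/α) := by nlinarith
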